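/- For each r ≥ 0 and each block B ∈ P_r of the binary hierarchy on ℕ₀ let H(B) be a random real symmetric B × B matrix, all independent, with entries H(B)_{xy} for x ≤ y independent centered Gaussians of variance |B|^{−(1+c)}·(1+δ_{xy})/|B|. If c > 1, then for every x ∈ ℕ₀, almost surely there exists C < ∞ such that ‖H(B_r(x))‖₁ ≤ C·2^{(1−c)r/4} for all r ≥ 0; in particular, almost surely Σ_{r≥0} ‖H(B_r(x))‖₁ < ∞. -/

import Mathlib

open MeasureTheory ProbabilityTheory Classical Matrix

/-- The eigenvalues (with multiplicity) of a real symmetric matrix. -/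
noncomputable def symEig {N : ℕ} (A : Matrix (Fin N) (Fin N) ℝ) : Fin N → ℝ :=
  if hA : A.IsHermitian then hA.eigenvalues else 0

/-- The trace norm of a real square matrix: the trace of `√(AᵀA)`, i.e. the sum of the
singular values of `A`. -/
noncomputable def traceNorm {N : ℕ} (A : Matrix (Fin N) (Fin N) ℝ) : ℝ :=
  ∑ i, Real.sqrt (symEig (Aᵀ * A) i)

open Real in
lemma gauss_sq_moment (v : NNReal) :
    ∫⁻ x : ℝ, ENNReal.ofReal (x ^ 2) ∂(gaussianReal 0 v) ≤ ENNReal.ofReal (6 * v) := by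
  rcases eq_or_ne v 0 with hv | hv
  · subst hv
    rw [gaussianReal_zero_var, lintegral_dirac]
    simp
  · rw [gaussianReal_of_var_ne_zero 0 hv,
      lintegral_withDensity_eq_lintegral_mul _ (measurable_gaussianPDF 0 v)
        (by fun_prop)]
    have hvpos : (0 : ℝ) < (v : ℝ) := by positivity
    have h2pi : (0 : ℝ) < 2 * Real.pi * v := by positivity
    -- pointwise bound
    have hpt : ∀ x : ℝ, (gaussianPDF 0 v * fun x => ENNReal.ofReal (x ^ 2)) x ≤
        ENNReal.ofReal ((√(2 * Real.pi * v))⁻¹ * (4 * v) * rexp (-(4 * (v:ℝ))⁻¹ * x ^ 2)) := by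
      intro x
      simp only [Pi.mul_apply, gaussianPDF, gaussianPDFReal, sub_zero]
      rw [← ENNReal.ofReal_mul (by positivity :
        (0:ℝ) ≤ (√(2 * Real.pi * v))⁻¹ * rexp (-x ^ 2 / (2 * v)))]
      apply ENNReal.ofReal_le_ofReal
      have hexp : rexp (-x ^ 2 / (2 * v)) * x ^ 2 ≤ 4 * v * rexp (-(4 * (v:ℝ))⁻¹ * x ^ 2) := by
        have hsplit : rexp (-x ^ 2 / (2 * v)) =
            rexp (-(4 * (v:ℝ))⁻¹ * x ^ 2) * rexp (-(4 * (v:ℝ))⁻¹ * x ^ 2) := by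
          rw [← Real.exp_add]; congr 1; field_simp; ring
        have hb : x ^ 2 * rexp (-(4 * (v:ℝ))⁻¹ * x ^ 2) ≤ 4 * v := by
          have ht : x ^ 2 / (4 * v) ≤ rexp (x ^ 2 / (4 * v)) :=
            le_trans (by linarith [Real.add_one_le_exp (x ^ 2 / (4 * v))])
              le_rfl
          have hx : x ^ 2 ≤ 4 * v * rexp (x ^ 2 / (4 * v)) := by
            have h4v : (0:ℝ) < 4 * v := by positivity
            calc x ^ 2 = 4 * v * (x ^ 2 / (4 * v)) := by field_simp
              _ ≤ 4 * v * rexp (x ^ 2 / (4 * v)) := by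
                  exact mul_le_mul_of_nonneg_left ht (by positivity)
          have hrw : -(4 * (v:ℝ))⁻¹ * x ^ 2 = -(x ^ 2 / (4 * v)) := by field_simp
          rw [hrw, Real.exp_neg]
          calc x ^ 2 * (rexp (x ^ 2 / (4 * (v:ℝ))))⁻¹
              ≤ (4 * (v:ℝ) * rexp (x ^ 2 / (4 * (v:ℝ)))) * (rexp (x ^ 2 / (4 * (v:ℝ))))⁻¹ :=
                mul_le_mul_of_nonneg_right hx (by positivity)
            _ = 4 * (v:ℝ) := by field_simp
        calc rexp (-x ^ 2 / (2 * v)) * x ^ 2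
            = (x ^ 2 * rexp (-(4 * (v:ℝ))⁻¹ * x ^ 2)) * rexp (-(4 * (v:ℝ))⁻¹ * x ^ 2) := by
              rw [hsplit]; ring
          _ ≤ 4 * v * rexp (-(4 * (v:ℝ))⁻¹ * x ^ 2) :=
              mul_le_mul_of_nonneg_right hb (Real.exp_nonneg _)
      calc (√(2 * Real.pi * v))⁻¹ * rexp (-x ^ 2 / (2 * v)) * x ^ 2
          = (√(2 * Real.pi * v))⁻¹ * (rexp (-x ^ 2 / (2 * v)) * x ^ 2) := by ring
        _ ≤ (√(2 * Real.pi * v))⁻¹ * (4 * v * rexp (-(4 * (v:ℝ))⁻¹ * x ^ 2)) := by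
            exact mul_le_mul_of_nonneg_left hexp (by positivity)
        _ = (√(2 * Real.pi * v))⁻¹ * (4 * v) * rexp (-(4 * (v:ℝ))⁻¹ * x ^ 2) := by ring
    calc ∫⁻ x, (gaussianPDF 0 v * fun x => ENNReal.ofReal (x ^ 2)) x
        ≤ ∫⁻ x, ENNReal.ofReal ((√(2 * Real.pi * v))⁻¹ * (4 * v) *
            rexp (-(4 * (v:ℝ))⁻¹ * x ^ 2)) := lintegral_mono hpt
      _ = ENNReal.ofReal ((√(2 * Real.pi * v))⁻¹ * (4 * v)) *
            ∫⁻ x, ENNReal.ofReal (rexp (-(4 * (v:ℝ))⁻¹ * x ^ 2)) := by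
          simp_rw [ENNReal.ofReal_mul (by positivity :
            (0:ℝ) ≤ (√(2 * Real.pi * v))⁻¹ * (4 * v))]
          rw [lintegral_const_mul _ (by fun_prop)]
      _ = ENNReal.ofReal ((√(2 * Real.pi * v))⁻¹ * (4 * v)) *
            ENNReal.ofReal (√(Real.pi / (4 * (v:ℝ))⁻¹)) := by
          congr 1
          rw [← MeasureTheory.ofReal_integral_eq_lintegral_ofReal
            (integrable_exp_neg_mul_sq (by positivity)) (Filter.Eventually.of_forall fun x => (Real.exp_nonneg _))]
          rw [integral_gaussian]
      _ ≤ ENNReal.ofReal (6 * v) := by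
          rw [← ENNReal.ofReal_mul (by positivity)]
          apply ENNReal.ofReal_le_ofReal
          have h1 : Real.pi / (4 * (v:ℝ))⁻¹ = (2 * Real.pi * v) * 2 := by field_simp; ring
          rw [h1, Real.sqrt_mul h2pi.le]
          rw [mul_comm ((√(2 * Real.pi * v))⁻¹) (4 * (v:ℝ)), mul_assoc, mul_assoc]
          rw [← mul_assoc ((√(2 * Real.pi * v))⁻¹) _ _, inv_mul_cancel₀ (by positivity)]
          have hs2 : Real.sqrt 2 ≤ 3 / 2 := by
            rw [show (3:ℝ)/2 = √((3/2)^2) from (Real.sqrt_sq (by norm_num)).symm]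
            apply Real.sqrt_le_sqrt; norm_num
          nlinarith [hvpos]

lemma traceNorm_nonneg' {N : ℕ} (A : Matrix (Fin N) (Fin N) ℝ) : 0 ≤ traceNorm A :=
  Finset.sum_nonneg fun _ _ => Real.sqrt_nonneg _

lemma traceNorm_le' {N : ℕ} (A : Matrix (Fin N) (Fin N) ℝ) :
    traceNorm A ≤ Real.sqrt ((N : ℝ) * ∑ p : Fin N, ∑ q : Fin N, A p q ^ 2) := by
  have hH : (Aᵀ * A).IsHermitian := by
    have := Matrix.isHermitian_conjTranspose_mul_self A
    rwa [Matrix.conjTranspose_eq_transpose_of_trivial] at this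
  have hPSD : (Aᵀ * A).PosSemidef := by
    have := Matrix.posSemidef_conjTranspose_mul_self A
    rwa [Matrix.conjTranspose_eq_transpose_of_trivial] at this
  have hnn : ∀ i, 0 ≤ symEig (Aᵀ * A) i := by
    intro i
    simp only [symEig, dif_pos hH]
    exact hPSD.eigenvalues_nonneg i
  -- sum of eigenvalues = trace
  have htr : ∑ i, symEig (Aᵀ * A) i = (Aᵀ * A).trace := by
    simp only [symEig, dif_pos hH]
    have hU := (Matrix.mem_unitaryGroup_iff).mp (Matrix.IsHermitian.eigenvectorUnitary hH).2
    calc ∑ i, hH.eigenvalues i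
        = (Matrix.diagonal ((RCLike.ofReal : ℝ → ℝ) ∘ hH.eigenvalues)).trace := by
          simp [Matrix.trace_diagonal]
      _ = (Aᵀ * A).trace := by
          have hU' := (Matrix.mem_unitaryGroup_iff').mp (Matrix.IsHermitian.eigenvectorUnitary hH).2
          conv_rhs => rw [hH.spectral_theorem]
          rw [Unitary.conjStarAlgAut_apply, Matrix.trace_mul_comm, ← Matrix.mul_assoc, hU', Matrix.one_mul]
  -- trace equals sum of squares of entries
  have htr2 : (Aᵀ * A).trace = ∑ p : Fin N, ∑ q : Fin N, A p q ^ 2 := by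
    rw [Finset.sum_comm]
    simp [Matrix.trace, Matrix.diag, Matrix.mul_apply, sq]
  -- Cauchy-Schwarz
  have hCS : (traceNorm A) ^ 2 ≤ (N : ℝ) * ∑ i, symEig (Aᵀ * A) i := by
    have := Finset.sum_mul_sq_le_sq_mul_sq Finset.univ (fun _ : Fin N => (1 : ℝ))
      (fun i => Real.sqrt (symEig (Aᵀ * A) i))
    simpa [traceNorm, Finset.card_univ, Real.sq_sqrt (hnn _)] using this
  rw [htr] at hCS
  rw [htr2] at hCS
  have h0 : 0 ≤ traceNorm A := traceNorm_nonneg' A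
  exact (Real.le_sqrt h0 (by positivity)).mpr hCS

/-- `M r k` is the random GOE-type block of the infinite-volume ultrametric ensemble on
the `k`-th block `{k·2^r, …, (k+1)·2^r − 1}` of level `r` of the binary hierarchy: all
blocks independent, entries `(x,y)` with `x ≤ y` independent centered Gaussians of
variance `|B|^{−(1+c)}(1+δ_{xy})/|B|`, `|B| = 2^r`.  If `c > 1`, then for every `x`,
almost surely there is `C < ∞` with `‖H(B_r(x))‖₁ ≤ C·2^{(1−c)r/4}` for all `r`; in
particular `∑_r ‖H(B_r(x))‖₁ < ∞` almost surely.  (The block of level `r` containing `x`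
has index `x / 2^r`.) -/
theorem ultrametric_blocks_traceNorm_summable
    {Ω : Type*} [MeasurableSpace Ω] (Pr : Measure Ω) [IsProbabilityMeasure Pr]
    (c : ℝ) (hc : 1 < c)
    (M : (r : ℕ) → ℕ → Ω → Matrix (Fin (2 ^ r)) (Fin (2 ^ r)) ℝ)
    (hmeas : ∀ (r k : ℕ) (x y : Fin (2 ^ r)), Measurable fun ω => M r k ω x y)
    (hsymm : ∀ (r k : ℕ) (ω : Ω), (M r k ω).IsSymm)
    (hlaw : ∀ (r k : ℕ) (x y : Fin (2 ^ r)), Pr.map (fun ω => M r k ω x y) =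
      gaussianReal 0 (Real.toNNReal
        (((2 : ℝ) ^ r) ^ (-(1 + c)) * (1 + if x = y then 1 else 0) / 2 ^ r)))
    (hindep : iIndepFun
      (fun (i : Σ r : ℕ, ℕ × {q : Fin (2 ^ r) × Fin (2 ^ r) // q.1 ≤ q.2}) ω =>
        M i.1 i.2.1 ω i.2.2.1.1 i.2.2.1.2) Pr) :
    ∀ x : ℕ, ∀ᵐ ω ∂Pr,
      (∃ C : ℝ, ∀ r : ℕ, traceNorm (M r (x / 2 ^ r) ω) ≤ C * (2 : ℝ) ^ ((1 - c) * r / 4)) ∧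
      Summable fun r : ℕ => traceNorm (M r (x / 2 ^ r) ω) := by
  intro x
  set F : (r : ℕ) → Ω → ℝ :=
    fun r ω => ∑ p : Fin (2 ^ r), ∑ q : Fin (2 ^ r), (M r (x / 2 ^ r) ω p q) ^ 2 with hF
  have hFmeas : ∀ r, Measurable (F r) := fun r =>
    Finset.measurable_sum _ fun p _ => Finset.measurable_sum _ fun q _ =>
      (hmeas r (x / 2 ^ r) p q).pow_const 2
  have hFnonneg : ∀ r ω, 0 ≤ F r ω := fun r ω =>
    Finset.sum_nonneg fun _ _ => Finset.sum_nonneg fun _ _ => sq_nonneg _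
  have two_pos' : (0:ℝ) < 2 := by norm_num
  -- per-entry second moment bound
  have hentry : ∀ (r : ℕ) (p q : Fin (2 ^ r)),
      ∫⁻ ω, ENNReal.ofReal ((M r (x / 2 ^ r) ω p q) ^ 2) ∂Pr ≤
        ENNReal.ofReal (12 * ((2:ℝ) ^ r) ^ (-(1 + c)) / 2 ^ r) := by
    intro r p q
    have hmap := lintegral_map (μ := Pr) (f := fun y : ℝ => ENNReal.ofReal (y ^ 2))
      (g := fun ω => M r (x / 2 ^ r) ω p q) (by fun_prop) (hmeas r (x / 2 ^ r) p q)
    rw [hlaw r (x / 2 ^ r) p q] at hmap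
    rw [show (fun ω => ENNReal.ofReal ((M r (x / 2 ^ r) ω p q) ^ 2)) =
      fun ω => (fun y : ℝ => ENNReal.ofReal (y ^ 2)) (M r (x / 2 ^ r) ω p q) from rfl]
    rw [← hmap]
    refine (gauss_sq_moment _).trans (ENNReal.ofReal_le_ofReal ?_)
    have hbase : (0:ℝ) ≤ ((2:ℝ) ^ r) ^ (-(1 + c)) := Real.rpow_nonneg (by positivity) _
    have h2r : (0:ℝ) < 2 ^ r := by positivity
    have hw : (0:ℝ) ≤ ((2:ℝ) ^ r) ^ (-(1 + c)) * (1 + if p = q then (1:ℝ) else 0) / 2 ^ r := by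
      split_ifs <;> positivity
    rw [Real.coe_toNNReal _ hw]
    have hδ : (1 + if p = q then (1:ℝ) else 0) ≤ 2 := by split_ifs <;> norm_num
    calc 6 * (((2:ℝ) ^ r) ^ (-(1 + c)) * (1 + if p = q then (1:ℝ) else 0) / 2 ^ r)
        ≤ 6 * (((2:ℝ) ^ r) ^ (-(1 + c)) * 2 / 2 ^ r) := by gcongr
      _ = 12 * ((2:ℝ) ^ r) ^ (-(1 + c)) / 2 ^ r := by ring
  -- total expectation bound
  have hint : ∀ r : ℕ, ∫⁻ ω, ENNReal.ofReal ((2 ^ r : ℝ) * F r ω) ∂Pr ≤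
      ENNReal.ofReal (12 * (2:ℝ) ^ ((1 - c) * r)) := by
    intro r
    have hmono : ∫⁻ ω, ENNReal.ofReal ((2 ^ r : ℝ) * F r ω) ∂Pr =
        ENNReal.ofReal ((2 ^ r : ℝ)) * ∫⁻ ω, ENNReal.ofReal (F r ω) ∂Pr := by
      simp_rw [ENNReal.ofReal_mul (by positivity : (0:ℝ) ≤ (2 ^ r : ℝ))]
      rw [lintegral_const_mul _ (by fun_prop)]
    rw [hmono]
    have hsum : ∫⁻ ω, ENNReal.ofReal (F r ω) ∂Pr ≤
        (2 ^ r : ℕ) • ((2 ^ r : ℕ) • ENNReal.ofReal (12 * ((2:ℝ) ^ r) ^ (-(1 + c)) / 2 ^ r)) := by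
      have : ∀ ω, ENNReal.ofReal (F r ω) =
          ∑ p : Fin (2 ^ r), ∑ q : Fin (2 ^ r),
            ENNReal.ofReal ((M r (x / 2 ^ r) ω p q) ^ 2) := by
        intro ω
        rw [hF]
        show ENNReal.ofReal (∑ p : Fin (2 ^ r), ∑ q : Fin (2 ^ r), (M r (x / 2 ^ r) ω p q) ^ 2) = _
        rw [ENNReal.ofReal_sum_of_nonneg (s := Finset.univ)
          (f := fun p => ∑ q : Fin (2 ^ r), (M r (x / 2 ^ r) ω p q) ^ 2) (fun p _ => Finset.sum_nonneg fun q _ => sq_nonneg _)]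
        exact Finset.sum_congr rfl fun p _ =>
          ENNReal.ofReal_sum_of_nonneg (fun q _ => sq_nonneg _)
      simp_rw [this]
      rw [lintegral_finset_sum _ (fun p _ => Finset.measurable_sum _ fun q _ => by fun_prop)]
      calc ∑ p : Fin (2 ^ r), ∫⁻ ω, ∑ q : Fin (2 ^ r),
              ENNReal.ofReal ((M r (x / 2 ^ r) ω p q) ^ 2) ∂Pr
          = ∑ p : Fin (2 ^ r), ∑ q : Fin (2 ^ r),
              ∫⁻ ω, ENNReal.ofReal ((M r (x / 2 ^ r) ω p q) ^ 2) ∂Pr := by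
            exact Finset.sum_congr rfl fun p _ => lintegral_finset_sum _ fun q _ => by fun_prop
        _ ≤ ∑ _p : Fin (2 ^ r), ∑ _q : Fin (2 ^ r),
              ENNReal.ofReal (12 * ((2:ℝ) ^ r) ^ (-(1 + c)) / 2 ^ r) := by
            exact Finset.sum_le_sum fun p _ => Finset.sum_le_sum fun q _ => hentry r p q
        _ = (2 ^ r : ℕ) • ((2 ^ r : ℕ) •
              ENNReal.ofReal (12 * ((2:ℝ) ^ r) ^ (-(1 + c)) / 2 ^ r)) := by
            simp [Finset.sum_const, Finset.card_univ]
    calc ENNReal.ofReal ((2 ^ r : ℝ)) * ∫⁻ ω, ENNReal.ofReal (F r ω) ∂Pr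
        ≤ ENNReal.ofReal ((2 ^ r : ℝ)) * ((2 ^ r : ℕ) • ((2 ^ r : ℕ) •
            ENNReal.ofReal (12 * ((2:ℝ) ^ r) ^ (-(1 + c)) / 2 ^ r))) := by
          exact mul_le_mul_right hsum _
      _ = ENNReal.ofReal ((2 ^ r : ℝ) * ((2 ^ r : ℝ) * ((2 ^ r : ℝ) *
            (12 * ((2:ℝ) ^ r) ^ (-(1 + c)) / 2 ^ r)))) := by
          rw [nsmul_eq_mul, nsmul_eq_mul, ← ENNReal.ofReal_natCast (2 ^ r),
            ← ENNReal.ofReal_mul (by positivity), ← ENNReal.ofReal_mul (by positivity),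
            ← ENNReal.ofReal_mul (by positivity)]
          congr 1
          push_cast
          ring
      _ = ENNReal.ofReal (12 * (2:ℝ) ^ ((1 - c) * r)) := by
          congr 1
          rw [show ((2:ℝ) ^ (r : ℕ)) = (2:ℝ) ^ ((r : ℕ) : ℝ) from (Real.rpow_natCast 2 r).symm,
            ← Real.rpow_mul (by norm_num : (0:ℝ) ≤ 2)]
          rw [div_eq_mul_inv, ← Real.rpow_neg (by norm_num : (0:ℝ) ≤ 2)]
          rw [show (1 - c) * (r:ℝ) =
            (r:ℝ) + ((r:ℝ) + ((r:ℝ) + ((r:ℝ) * -(1 + c) + -(r:ℝ)))) from by ring]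
          simp only [Real.rpow_add two_pos']
          ring
  -- events
  set s : ℕ → Set Ω := fun r => {ω | (2:ℝ) ^ ((1 - c) * r / 2) ≤ (2 ^ r : ℝ) * F r ω} with hs
  have hsm : ∀ r, MeasurableSet (s r) := fun r =>
    measurableSet_le measurable_const ((hFmeas r).const_mul _)
  -- Markov bound on each event
  have hμ : ∀ r, Pr (s r) ≤ ENNReal.ofReal (12 * (2:ℝ) ^ ((1 - c) * r / 2)) := by
    intro r
    set ε : ENNReal := ENNReal.ofReal ((2:ℝ) ^ ((1 - c) * r / 2)) with hε
    have hεpos : (0:ℝ) < (2:ℝ) ^ ((1 - c) * r / 2) := Real.rpow_pos_of_pos two_pos' _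
    have hε0 : ε ≠ 0 := by simp [hε, ENNReal.ofReal_pos, hεpos]
    have hεtop : ε ≠ ⊤ := ENNReal.ofReal_ne_top
    have hsub : s r ⊆ {ω | ε ≤ ENNReal.ofReal ((2 ^ r : ℝ) * F r ω)} := by
      intro ω hω
      exact ENNReal.ofReal_le_ofReal hω
    have hmarkov := mul_meas_ge_le_lintegral₀
      (μ := Pr) (f := fun ω => ENNReal.ofReal ((2 ^ r : ℝ) * F r ω))
      (((hFmeas r).const_mul _).ennreal_ofReal.aemeasurable) ε
    have h1 : ε * Pr (s r) ≤ ENNReal.ofReal (12 * (2:ℝ) ^ ((1 - c) * r)) :=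
      le_trans (mul_le_mul_right (measure_mono hsub) ε) (le_trans hmarkov (hint r))
    have h2 : ENNReal.ofReal (12 * (2:ℝ) ^ ((1 - c) * r)) =
        ε * ENNReal.ofReal (12 * (2:ℝ) ^ ((1 - c) * r / 2)) := by
      rw [hε, ← ENNReal.ofReal_mul hεpos.le]
      congr 1
      rw [show (1 - c) * (r:ℝ) = (1 - c) * r / 2 + (1 - c) * r / 2 from by ring,
        Real.rpow_add two_pos']
      ring
    rw [h2] at h1
    exact (ENNReal.mul_le_mul_iff_right hε0 hεtop).mp h1
  -- summability of the bounds
  have hq : (0:ℝ) ≤ (2:ℝ) ^ ((1 - c) / 2) := (Real.rpow_pos_of_pos two_pos' _).le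
  have hq1 : (2:ℝ) ^ ((1 - c) / 2) < 1 :=
    Real.rpow_lt_one_of_one_lt_of_neg (by norm_num) (by linarith)
  have hqr : ∀ r : ℕ, (2:ℝ) ^ ((1 - c) * r / 2) = ((2:ℝ) ^ ((1 - c) / 2)) ^ r := by
    intro r
    rw [← Real.rpow_natCast ((2:ℝ) ^ ((1 - c) / 2)) r, ← Real.rpow_mul (by norm_num)]
    congr 1
    ring
  have hsummable : Summable fun r : ℕ => 12 * ((2:ℝ) ^ ((1 - c) / 2)) ^ r :=
    (summable_geometric_of_lt_one hq hq1).mul_left 12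
  have htsum : (∑' r, Pr (s r)) ≠ ⊤ := by
    have hle : (∑' r, Pr (s r)) ≤ ∑' r, ENNReal.ofReal (12 * ((2:ℝ) ^ ((1 - c) / 2)) ^ r) := by
      refine ENNReal.tsum_le_tsum fun r => ?_
      rw [← hqr r]
      exact hμ r
    rw [← ENNReal.ofReal_tsum_of_nonneg (fun r => by positivity) hsummable] at hle
    exact ne_top_of_le_ne_top ENNReal.ofReal_ne_top hle
  -- Borel--Cantelli
  have hae := MeasureTheory.ae_eventually_notMem (μ := Pr) htsum
  filter_upwards [hae] with ω hω
  obtain ⟨R, hR⟩ := Filter.eventually_atTop.mp hω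
  -- eventual trace norm bound
  have hT : ∀ r, R ≤ r → traceNorm (M r (x / 2 ^ r) ω) ≤ (2:ℝ) ^ ((1 - c) * r / 4) := by
    intro r hr
    have hlt : (2 ^ r : ℝ) * F r ω < (2:ℝ) ^ ((1 - c) * r / 2) := by
      by_contra hcon
      exact hR r hr (not_lt.mp hcon)
    calc traceNorm (M r (x / 2 ^ r) ω)
        ≤ Real.sqrt (((2 ^ r : ℕ) : ℝ) * ∑ p : Fin (2 ^ r), ∑ q : Fin (2 ^ r),
            (M r (x / 2 ^ r) ω p q) ^ 2) := traceNorm_le' _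
      _ = Real.sqrt ((2 ^ r : ℝ) * F r ω) := by push_cast; rfl
      _ ≤ Real.sqrt ((2:ℝ) ^ ((1 - c) * r / 2)) := Real.sqrt_le_sqrt hlt.le
      _ = (2:ℝ) ^ ((1 - c) * r / 4) := by
          rw [show (2:ℝ) ^ ((1 - c) * r / 2) = ((2:ℝ) ^ ((1 - c) * r / 4)) ^ 2 from by
            rw [sq, ← Real.rpow_add two_pos']; congr 1; ring]
          exact Real.sqrt_sq (Real.rpow_pos_of_pos two_pos' _).le
  -- the constant
  set g : ℕ → ℝ := fun r => (2:ℝ) ^ ((1 - c) * r / 4) with hg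
  have hgpos : ∀ r, 0 < g r := fun r => Real.rpow_pos_of_pos two_pos' _
  set C : ℝ := 1 + ∑ r ∈ Finset.range R, traceNorm (M r (x / 2 ^ r) ω) / g r with hC
  have hC1 : (1:ℝ) ≤ C := by
    have : (0:ℝ) ≤ ∑ r ∈ Finset.range R, traceNorm (M r (x / 2 ^ r) ω) / g r :=
      Finset.sum_nonneg fun r _ => div_nonneg (traceNorm_nonneg' _) (hgpos r).le
    rw [hC]
    linarith
  have hbound : ∀ r : ℕ, traceNorm (M r (x / 2 ^ r) ω) ≤ C * g r := by
    intro r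
    rcases lt_or_ge r R with hrR | hrR
    · have h1 : traceNorm (M r (x / 2 ^ r) ω) / g r ≤ C := by
        have := Finset.single_le_sum
          (f := fun i => traceNorm (M i (x / 2 ^ i) ω) / g i)
          (fun i _ => div_nonneg (traceNorm_nonneg' _) (hgpos i).le)
          (Finset.mem_range.mpr hrR)
        linarith
      calc traceNorm (M r (x / 2 ^ r) ω)
          = (traceNorm (M r (x / 2 ^ r) ω) / g r) * g r := by
            exact (div_mul_cancel₀ _ (hgpos r).ne').symm
        _ ≤ C * g r := mul_le_mul_of_nonneg_right h1 (hgpos r).le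
    · calc traceNorm (M r (x / 2 ^ r) ω) ≤ g r := hT r hrR
        _ = 1 * g r := (one_mul _).symm
        _ ≤ C * g r := mul_le_mul_of_nonneg_right hC1 (hgpos r).le
  refine ⟨⟨C, hbound⟩, ?_⟩
  -- summability
  have hq4 : (0:ℝ) ≤ (2:ℝ) ^ ((1 - c) / 4) := (Real.rpow_pos_of_pos two_pos' _).le
  have hq41 : (2:ℝ) ^ ((1 - c) / 4) < 1 :=
    Real.rpow_lt_one_of_one_lt_of_neg (by norm_num) (by linarith)
  have hgr : ∀ r : ℕ, g r = ((2:ℝ) ^ ((1 - c) / 4)) ^ r := by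
    intro r
    show (2:ℝ) ^ ((1 - c) * (r:ℕ) / 4) = _
    rw [← Real.rpow_natCast ((2:ℝ) ^ ((1 - c) / 4)) r, ← Real.rpow_mul (by norm_num)]
    congr 1
    ring
  have hsum4 : Summable fun r : ℕ => C * ((2:ℝ) ^ ((1 - c) / 4)) ^ r :=
    (summable_geometric_of_lt_one hq4 hq41).mul_left C
  have hle4 : ∀ r : ℕ, traceNorm (M r (x / 2 ^ r) ω) ≤ C * ((2:ℝ) ^ ((1 - c) / 4)) ^ r := by
    intro r
    have := hbound r
    rw [hgr r] at this
    exact this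
  exact Summable.of_nonneg_of_le (fun r => traceNorm_nonneg' _) hle4 hsum4
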